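/- If for some k ≥ 1 one has Qᵏ = Q^{k−1} ≠ ∅, then inf Q^{k−1} ∈ P; in particular, if P = ∅, then the sequence (Qᵏ) is strictly decreasing as long as its terms are nonempty, i.e., Qᵏ ≠ ∅ implies Q^{k+1} ⊊ Qᵏ. -/

import Mathlib

open Classical in
/-- The decreasing sequence of sets `Qᵏ`: `Q⁰ = [0,1]` and
`Q^{k+1} = {q ∈ Qᵏ : (1−δ)·u*(q) + δ·Uᵏ(q) ≥ m(q)}`, where `Uᵏ` is the chord of `m`
from `(inf Qᵏ, m(inf Qᵏ))` to `(1, m(1))` (constant `m(1)` if `inf Qᵏ = 1`). -/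
noncomputable def Qseq (m ustar : ℝ → ℝ) (δ : ℝ) : ℕ → Set ℝ
  | 0 => Set.Icc 0 1
  | k + 1 =>
      if Qseq m ustar δ k = ∅ then (∅ : Set ℝ)
      else
        {q ∈ Qseq m ustar δ k |
          (1 - δ) * ustar q +
            δ * (if sInf (Qseq m ustar δ k) < 1 then
                ((1 - q) * m (sInf (Qseq m ustar δ k))
                  + (q - sInf (Qseq m ustar δ k)) * m 1) / (1 - sInf (Qseq m ustar δ k))
              else m 1)
          ≥ m q}

lemma Qseq_subset_Icc (m ustar : ℝ → ℝ) (δ : ℝ) :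
    ∀ k, Qseq m ustar δ k ⊆ Set.Icc (0 : ℝ) 1 := by
  intro k
  induction k with
  | zero => rw [Qseq]
  | succ k ih =>
    rw [Qseq]
    split
    · simp
    · exact fun q hq => ih hq.1

lemma ustar_affine_eq (ustar : ℝ → ℝ)
    (haff : ∀ x y t : ℝ, ustar ((1 - t) * x + t * y) = (1 - t) * ustar x + t * ustar y) :
    ustar = fun q => (1 - q) * ustar 0 + q * ustar 1 := by
  funext q
  have h := haff 0 1 q
  have hq : (1 - q) * 0 + q * 1 = q := by ring
  rw [hq] at h
  exact h

lemma ustar_cont (ustar : ℝ → ℝ)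
    (haff : ∀ x y t : ℝ, ustar ((1 - t) * x + t * y) = (1 - t) * ustar x + t * ustar y) :
    Continuous ustar := by
  rw [ustar_affine_eq ustar haff]
  continuity

lemma Qseq_closed (m ustar : ℝ → ℝ) (δ : ℝ)
    (hcont : ContinuousOn m (Set.Icc (0 : ℝ) 1))
    (haff : ∀ x y t : ℝ, ustar ((1 - t) * x + t * y) = (1 - t) * ustar x + t * ustar y) :
    ∀ k, IsClosed (Qseq m ustar δ k) := by
  intro k
  induction k with
  | zero => rw [Qseq]; exact isClosed_Icc
  | succ k ih =>
    rw [Qseq]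
    split
    · exact isClosed_empty
    · have hmQ : ContinuousOn m (Qseq m ustar δ k) :=
        hcont.mono (Qseq_subset_Icc m ustar δ k)
      set b := sInf (Qseq m ustar δ k) with hb
      have hFcont : Continuous (fun q : ℝ => (1 - δ) * ustar q +
          δ * (if b < 1 then ((1 - q) * m b + (q - b) * m 1) / (1 - b) else m 1)) := by
        have hu := ustar_cont ustar haff
        by_cases hb1 : b < 1
        · simp only [if_pos hb1]
          fun_prop
        · simp only [if_neg hb1]
          fun_prop
      exact ih.isClosed_le hmQ hFcont.continuousOn

theorem Qseq_stationary_implies_inf_in_P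
    (m ustar : ℝ → ℝ) (δ : ℝ) (hδ : δ ∈ Set.Ioo (0 : ℝ) 1)
    (hconv : ConvexOn ℝ (Set.Icc (0 : ℝ) 1) m)
    (hcont : ContinuousOn m (Set.Icc (0 : ℝ) 1))
    (haff : ∀ x y t : ℝ, ustar ((1 - t) * x + t * y) = (1 - t) * ustar x + t * ustar y)
    (hle : ∀ p ∈ Set.Icc (0 : ℝ) 1, ustar p ≤ m p) :
    (∀ k : ℕ, Qseq m ustar δ (k + 1) = Qseq m ustar δ k →
      (Qseq m ustar δ k).Nonempty →
      sInf (Qseq m ustar δ k) ∈ {p ∈ Set.Icc (0 : ℝ) 1 | m p = ustar p}) ∧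
    ({p ∈ Set.Icc (0 : ℝ) 1 | m p = ustar p} = ∅ →
      ∀ k : ℕ, (Qseq m ustar δ k).Nonempty →
        Qseq m ustar δ (k + 1) ⊂ Qseq m ustar δ k) := by
  have main : ∀ k : ℕ, Qseq m ustar δ (k + 1) = Qseq m ustar δ k →
      (Qseq m ustar δ k).Nonempty →
      sInf (Qseq m ustar δ k) ∈ {p ∈ Set.Icc (0 : ℝ) 1 | m p = ustar p} := by
    intro k heq hne
    set Q := Qseq m ustar δ k with hQ
    set b := sInf Q with hb
    have hsub : Q ⊆ Set.Icc (0 : ℝ) 1 := Qseq_subset_Icc m ustar δ k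
    have hbdd : BddBelow Q := ⟨0, fun x hx => (hsub hx).1⟩
    have hbQ : b ∈ Q := (Qseq_closed m ustar δ hcont haff k).csInf_mem hne hbdd
    have hbI : b ∈ Set.Icc (0 : ℝ) 1 := hsub hbQ
    -- b ∈ Q^{k+1}
    have hbQ1 : b ∈ Qseq m ustar δ (k + 1) := heq ▸ hbQ
    rw [Qseq, if_neg (Set.nonempty_iff_ne_empty.mp hne)] at hbQ1
    obtain ⟨-, hineq⟩ := hbQ1
    have hchord : (if sInf (Qseq m ustar δ k) < 1 then
        ((1 - b) * m (sInf (Qseq m ustar δ k))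
          + (b - sInf (Qseq m ustar δ k)) * m 1) / (1 - sInf (Qseq m ustar δ k))
        else m 1) = m b := by
      rw [← hb]
      by_cases h1 : b < 1
      · rw [if_pos h1]
        have hne1 : (1:ℝ) - b ≠ 0 := by linarith
        field_simp
        ring
      · rw [if_neg h1]
        have : b = 1 := le_antisymm hbI.2 (not_lt.mp h1)
        rw [this]
    rw [hchord] at hineq
    have hum : ustar b ≥ m b := by nlinarith [hδ.2, hδ.1]
    exact ⟨hbI, le_antisymm (hum) (hle b hbI) |>.symm ▸ rfl⟩
  refine ⟨main, fun hP k hne => ?_⟩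
  have hsub1 : Qseq m ustar δ (k + 1) ⊆ Qseq m ustar δ k := by
    rw [Qseq, if_neg (Set.nonempty_iff_ne_empty.mp hne)]
    exact fun q hq => hq.1
  refine ⟨hsub1, fun hsub2 => ?_⟩
  have heq := Set.Subset.antisymm hsub1 hsub2
  have := main k heq hne
  rw [hP] at this
  exact this
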